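/- Let 𝒞 be a pretriangulated category with a weight structure and let X ∈ 𝒞^{w≤0}. Suppose given distinguished triangles A → X → X' → A[1] and B[1] → X' → X'' → B[2] with A, B ∈ 𝒞^{w≥0}, X' ∈ 𝒞^{w<0} and X'' ∈ 𝒞^{w<-1}. Then A and B lie in the heart 𝒞^{w=0}, and for every T ∈ 𝒞^{w=0} the sequence Hom(T, B) → Hom(T, A) → Hom(T, X) → 0 is exact, where the first map is induced by the composite B → X'[-1] → A obtained by rotating the two given triangles, and the second map is induced by A → X. -/

import Mathlib

open CategoryTheory Category Limits Pretriangulated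

/-- A weight structure on a pretriangulated category. -/
structure WeightStructure (C : Type*) [Category C] [HasZeroObject C] [HasShift C ℤ]
    [Preadditive C] [∀ n : ℤ, (CategoryTheory.shiftFunctor C n).Additive]
    [Pretriangulated C] [HasBinaryBiproducts C] where
  le : C → Prop
  ge : C → Prop
  le_of_isZero : ∀ X : C, IsZero X → le X
  ge_of_isZero : ∀ X : C, IsZero X → ge X
  le_of_iso : ∀ {X Y : C}, (X ≅ Y) → le X → le Y
  ge_of_iso : ∀ {X Y : C}, (X ≅ Y) → ge X → ge Y
  le_biprod : ∀ X Y : C, le X → le Y → le (X ⊞ Y)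
  ge_biprod : ∀ X Y : C, ge X → ge Y → ge (X ⊞ Y)
  le_retract : ∀ (X Y : C) (i : X ⟶ Y) (p : Y ⟶ X), i ≫ p = 𝟙 X → le Y → le X
  ge_retract : ∀ (X Y : C) (i : X ⟶ Y) (p : Y ⟶ X), i ≫ p = 𝟙 X → ge Y → ge X
  ge_shift : ∀ X : C, ge X → ge (X⟦(-1 : ℤ)⟧)
  le_shift : ∀ X : C, le X → le (X⟦(1 : ℤ)⟧)
  orth : ∀ {X Y : C}, ge X → le Y → ∀ f : X ⟶ Y⟦(1 : ℤ)⟧, f = 0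
  decomp : ∀ X : C, ∃ (A B : C) (f : B ⟶ X) (g : X ⟶ A) (h : A ⟶ B⟦(1 : ℤ)⟧),
    ge (B⟦(1 : ℤ)⟧) ∧ le A ∧ Triangle.mk f g h ∈ distTriang C

variable {C : Type*} [Category C] [HasZeroObject C] [HasShift C ℤ]
  [Preadditive C] [∀ n : ℤ, (CategoryTheory.shiftFunctor C n).Additive]
  [Pretriangulated C] [HasBinaryBiproducts C]

/-- `X ∈ 𝒞^{w≤n}`, i.e. `X⟦n⟧ ∈ 𝒞^{w≤0}`. -/
def WeightStructure.leN (w : WeightStructure C) (n : ℤ) (X : C) : Prop := w.le (X⟦n⟧)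

/-- The heart `𝒞^{w=0} = 𝒞^{w≥0} ∩ 𝒞^{w≤0}`. -/
def WeightStructure.heart (w : WeightStructure C) (X : C) : Prop := w.ge X ∧ w.le X

/-- The composite `B → X'[-1] → A` obtained by rotating (shifting by `[-1]`) the maps
`u : B[1] → X'` and `h : X' → A[1]`. -/
noncomputable def rotComp {A B X' : C} (u : B⟦(1 : ℤ)⟧ ⟶ X') (h : X' ⟶ A⟦(1 : ℤ)⟧) :
    B ⟶ A :=
  ((shiftFunctorCompIsoId C (1 : ℤ) (-1 : ℤ) (by omega)).app B).inv ≫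
    (CategoryTheory.shiftFunctor C (-1 : ℤ)).map u ≫
    (CategoryTheory.shiftFunctor C (-1 : ℤ)).map h ≫
    ((shiftFunctorCompIsoId C (1 : ℤ) (-1 : ℤ) (by omega)).app A).hom


/-- Any morphism from an object of `𝒞^{w≥0}` to an object of `𝒞^{w≤-1}` vanishes. -/
lemma hom_zero_of_ge_le (w : WeightStructure C) {T Y : C} (hT : w.ge T)
    (hY : w.le (Y⟦(-1 : ℤ)⟧)) (α : T ⟶ Y) : α = 0 := by
  have e : Y⟦(-1 : ℤ)⟧⟦(1 : ℤ)⟧ ≅ Y := (shiftFunctorCompIsoId C (-1 : ℤ) (1 : ℤ) (by omega)).app Y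
  have h0 : α ≫ e.inv = 0 := w.orth hT hY _
  have : α = (α ≫ e.inv) ≫ e.hom := by simp
  rw [this, h0, zero_comp]

/-- `𝒞^{w≤0}` is closed under extensions. -/
lemma le_ext (w : WeightStructure C) (T : Triangle C) (hT : T ∈ distTriang C)
    (h1 : w.le T.obj₁) (h3 : w.le T.obj₃) : w.le T.obj₂ := by
  obtain ⟨A', B', b, g, m, hgeB, hleA, hdt⟩ := w.decomp T.obj₂
  have hb3 : b ≫ T.mor₂ = 0 := by
    apply (CategoryTheory.shiftFunctor C (1 : ℤ)).map_injective
    rw [Functor.map_zero]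
    exact w.orth hgeB h3 _
  obtain ⟨c, hc⟩ := Triangle.coyoneda_exact₂ T hT b hb3
  have hc0 : c = 0 := by
    apply (CategoryTheory.shiftFunctor C (1 : ℤ)).map_injective
    rw [Functor.map_zero]
    exact w.orth hgeB h1 _
  have hb0 : b = 0 := by rw [hc, hc0, zero_comp]
  obtain ⟨r, hr⟩ := Triangle.yoneda_exact₂ _ hdt (𝟙 T.obj₂)
    (by exact (comp_id _).trans hb0)
  exact w.le_retract T.obj₂ A' g r hr.symm hleA

set_option linter.unusedSectionVars false in
/-- Rewriting `rotComp` with a fixed proof term. -/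
lemma rotComp_eq {A B X' : C} (u : B⟦(1 : ℤ)⟧ ⟶ X') (h : X' ⟶ A⟦(1 : ℤ)⟧) :
    rotComp u h =
      ((shiftFunctorCompIsoId C (1 : ℤ) (-1 : ℤ) (add_neg_cancel 1)).app B).inv ≫
        (CategoryTheory.shiftFunctor C (-1 : ℤ)).map u ≫
        (CategoryTheory.shiftFunctor C (-1 : ℤ)).map h ≫
        ((shiftFunctorCompIsoId C (1 : ℤ) (-1 : ℤ) (add_neg_cancel 1)).app A).hom := rfl

/-- Given `X ∈ 𝒞^{w≤0}` with distinguished triangles `A → X → X' → A[1]` and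
`B[1] → X' → X'' → B[2]` where `A, B ∈ 𝒞^{w≥0}`, `X' ∈ 𝒞^{w<0}` and `X'' ∈ 𝒞^{w<-1}`,
the objects `A` and `B` lie in the heart, and for every `T` in the heart the sequence
`Hom(T, B) → Hom(T, A) → Hom(T, X) → 0` is exact, the first map being induced by the
composite `B → X'[-1] → A` and the second by `A → X`. -/
theorem stmt_8 (w : WeightStructure C)
    (X A X' B X'' : C) (hX : w.le X)
    (f : A ⟶ X) (g : X ⟶ X') (h : X' ⟶ A⟦(1 : ℤ)⟧)
    (hT₁ : Triangle.mk f g h ∈ distTriang C)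
    (u : B⟦(1 : ℤ)⟧ ⟶ X') (v : X' ⟶ X'') (wmap : X'' ⟶ (B⟦(1 : ℤ)⟧)⟦(1 : ℤ)⟧)
    (hT₂ : Triangle.mk u v wmap ∈ distTriang C)
    (hA : w.ge A) (hB : w.ge B)
    (hX' : w.leN (-1) X') (hX'' : w.leN (-2) X'') :
    w.heart A ∧ w.heart B ∧
      ∀ T : C, w.heart T →
        (∀ χ : T ⟶ B, χ ≫ rotComp u h ≫ f = 0) ∧
        (∀ ψ : T ⟶ A, ψ ≫ f = 0 → ∃ χ : T ⟶ B, χ ≫ rotComp u h = ψ) ∧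
        (∀ φ : T ⟶ X, ∃ ψ : T ⟶ A, ψ ≫ f = φ) := by
  -- A is in the heart
  have hleA : w.le A := by
    have := le_ext w _ (inv_rot_of_distTriang _ hT₁) (hX' : w.le (X'⟦(-1 : ℤ)⟧)) hX
    exact this
  -- the shifted second triangle
  have hTsh : (Triangle.shiftFunctor C (-1 : ℤ)).obj (Triangle.mk u v wmap) ∈ distTriang C :=
    Triangle.shift_distinguished _ hT₂ (-1 : ℤ)
  set Tsh := (Triangle.shiftFunctor C (-1 : ℤ)).obj (Triangle.mk u v wmap) with hTshdef
  -- B is in the heart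
  have hleX''m1m1 : w.le (X''⟦(-1 : ℤ)⟧⟦(-1 : ℤ)⟧) :=
    w.le_of_iso ((shiftFunctorAdd' C (-1 : ℤ) (-1 : ℤ) (-2 : ℤ) (by omega)).app X'') hX''
  have hleB : w.le B := by
    have h2 := le_ext w _ (inv_rot_of_distTriang _ hTsh) hleX''m1m1 (hX' : w.le (X'⟦(-1 : ℤ)⟧))
    exact w.le_of_iso ((shiftFunctorCompIsoId C (1 : ℤ) (-1 : ℤ) (add_neg_cancel 1)).app B) h2
  refine ⟨⟨hA, hleA⟩, ⟨hB, hleB⟩, fun T hT => ?_⟩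
  -- the key composite vanishes
  have hcomp : rotComp u h ≫ f = 0 := by
    have h31 : h ≫ f⟦(1 : ℤ)⟧' = 0 := comp_distTriang_mor_zero₃₁ _ hT₁
    have hnat : ((shiftFunctorCompIsoId C (1 : ℤ) (-1 : ℤ) (add_neg_cancel 1)).app A).hom ≫ f
        = (f⟦(1 : ℤ)⟧')⟦(-1 : ℤ)⟧' ≫
          ((shiftFunctorCompIsoId C (1 : ℤ) (-1 : ℤ) (add_neg_cancel 1)).app X).hom := by
      simpa using ((shiftFunctorCompIsoId C (1 : ℤ) (-1 : ℤ) (add_neg_cancel 1)).hom.naturality f).symm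
    rw [rotComp_eq, assoc, assoc, assoc, hnat, ← Functor.map_comp_assoc,
      ← Functor.map_comp_assoc, assoc, h31, comp_zero, Functor.map_zero, zero_comp, comp_zero]
  refine ⟨fun χ => by rw [hcomp, comp_zero], fun ψ hψ => ?_, fun φ => ?_⟩
  · -- exactness at Hom(T, A)
    obtain ⟨χ', hχ'⟩ := Triangle.coyoneda_exact₂ _ (inv_rot_of_distTriang _ hT₁) ψ hψ
    have hχ'₂ : ψ = (-χ') ≫ (h⟦(-1 : ℤ)⟧' ≫
        ((shiftFunctorCompIsoId C (1 : ℤ) (-1 : ℤ) (add_neg_cancel 1)).app A).hom) := by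
      rw [hχ']
      dsimp [Triangle.invRotate, shiftEquiv']
      exact (Preadditive.comp_neg _ _).trans (Preadditive.neg_comp _ _).symm
    have hzero : (-χ') ≫ Tsh.mor₂ = 0 := by
      refine hom_zero_of_ge_le w hT.1 ?_ _
      exact hleX''m1m1
    obtain ⟨χ₀, hχ₀⟩ := Triangle.coyoneda_exact₂ _ hTsh (-χ') hzero
    refine ⟨-(χ₀ ≫ ((shiftFunctorCompIsoId C (1 : ℤ) (-1 : ℤ) (add_neg_cancel 1)).app B).hom), ?_⟩
    have hmor₁ : Tsh.mor₁ = -(u⟦(-1 : ℤ)⟧') := by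
      dsimp [Tsh, Triangle.shiftFunctor]
      simp [Int.negOnePow_neg, Int.negOnePow_one, Units.smul_def]
      rfl
    rw [hmor₁] at hχ₀
    rw [rotComp_eq, hχ'₂, hχ₀]
    have aux := Iso.hom_inv_id_assoc ((shiftFunctorCompIsoId C (1 : ℤ) (-1 : ℤ) (add_neg_cancel 1)).app B) (u⟦(-1 : ℤ)⟧' ≫ (h⟦(-1 : ℤ)⟧' ≫ ((shiftFunctorCompIsoId C (1 : ℤ) (-1 : ℤ) (add_neg_cancel 1)).app A).hom))
    have l1 : (χ₀ ≫ ((shiftFunctorCompIsoId C (1 : ℤ) (-1 : ℤ) (add_neg_cancel 1)).app B).hom) ≫ ((shiftFunctorCompIsoId C (1 : ℤ) (-1 : ℤ) (add_neg_cancel 1)).app B).inv ≫ u⟦(-1 : ℤ)⟧' ≫ (h⟦(-1 : ℤ)⟧' ≫ ((shiftFunctorCompIsoId C (1 : ℤ) (-1 : ℤ) (add_neg_cancel 1)).app A).hom) =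
        χ₀ ≫ u⟦(-1 : ℤ)⟧' ≫ (h⟦(-1 : ℤ)⟧' ≫ ((shiftFunctorCompIsoId C (1 : ℤ) (-1 : ℤ) (add_neg_cancel 1)).app A).hom) := (assoc _ _ _).trans (congrArg (fun k => χ₀ ≫ k) aux)
    have l2 : (χ₀ ≫ (-(u⟦(-1 : ℤ)⟧'))) ≫ (h⟦(-1 : ℤ)⟧' ≫ ((shiftFunctorCompIsoId C (1 : ℤ) (-1 : ℤ) (add_neg_cancel 1)).app A).hom) = -(χ₀ ≫ u⟦(-1 : ℤ)⟧' ≫ (h⟦(-1 : ℤ)⟧' ≫ ((shiftFunctorCompIsoId C (1 : ℤ) (-1 : ℤ) (add_neg_cancel 1)).app A).hom)) :=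
      (congrArg (fun k => k ≫ (h⟦(-1 : ℤ)⟧' ≫ ((shiftFunctorCompIsoId C (1 : ℤ) (-1 : ℤ) (add_neg_cancel 1)).app A).hom)) (Preadditive.comp_neg χ₀ (u⟦(-1 : ℤ)⟧'))).trans
        ((Preadditive.neg_comp _ _).trans (congrArg Neg.neg (assoc _ _ _)))
    rw [Preadditive.neg_comp, l1]
    exact l2.symm
  · -- surjectivity of Hom(T, A) → Hom(T, X)
    have hφg : φ ≫ g = 0 := hom_zero_of_ge_le w hT.1 hX' _
    obtain ⟨ψ, hψ⟩ := Triangle.coyoneda_exact₂ _ hT₁ φ hφg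
    exact ⟨ψ, hψ.symm⟩
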